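/- Let v₀ > 0, let Ψ : ℝ² → ℝ be continuously differentiable, let u = (∂Ψ/∂y, −∂Ψ/∂x), and let (r, θ) : I → ℝ² × ℝ be a differentiable curve satisfying ṙ(t) = u(r(t)) + v₀ n̂(θ(t)) on an open interval I. Then at any time t ∈ I with ṙ(t) ≠ 0, the point (r(t), θ(t)) is sliding (i.e. ṙ(t) · n̂(θ(t)) = 0) if and only if |(d/dt) Ψ(r(t))| = v₀ |ṙ(t)|; i.e. the front elements that ascend or descend the stream function at rate exactly v₀ per unit arc length are precisely the sliding ones. -/

import Mathlib

noncomputable section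

open Real Polynomial

/-- Points in the plane, with the Euclidean norm. -/
abbrev Pt : Type := EuclideanSpace ℝ (Fin 2)

/-- Build a point of the plane from two coordinates. -/
def vec2 (a b : ℝ) : Pt := (WithLp.equiv 2 (Fin 2 → ℝ)).symm ![a, b]

/-- Front tangent direction ĝ(θ) = (cos θ, sin θ). -/
def ghat (θ : ℝ) : Pt := vec2 (Real.cos θ) (Real.sin θ)

/-- Front normal (burning) direction n̂(θ) = (sin θ, −cos θ). -/
def nhat (θ : ℝ) : Pt := vec2 (Real.sin θ) (-(Real.cos θ))

/-- Euclidean dot product on the plane. -/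
def dot (v w : Pt) : ℝ := v 0 * w 0 + v 1 * w 1

/-- The Jacobian matrix Du(r) of a planar vector field. -/
def jacOf (u : Pt → Pt) (r : Pt) : Matrix (Fin 2) (Fin 2) ℝ :=
  fun i j => fderiv ℝ u r (EuclideanSpace.single j 1) i

/-- Action of a 2×2 matrix on a point of the plane. -/
def mulVec2 (M : Matrix (Fin 2) (Fin 2) ℝ) (v : Pt) : Pt :=
  vec2 (M 0 0 * v 0 + M 0 1 * v 1) (M 1 0 * v 0 + M 1 1 * v 1)

/-- The three-dimensional front-element vector field
    F(r, θ) = (u(r) + v₀ n̂(θ), −n̂(θ)·(Du(r) ĝ(θ))). -/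
def frontField (v₀ : ℝ) (u : Pt → Pt) (q : Pt × ℝ) : Pt × ℝ :=
  (u q.1 + v₀ • nhat q.2, -(dot (nhat q.2) (mulVec2 (jacOf u q.1) (ghat q.2))))

/-- The standard basis of ℝ² × ℝ ≃ ℝ³. -/
def basis3 : Fin 3 → Pt × ℝ :=
  ![(EuclideanSpace.single 0 1, 0), (EuclideanSpace.single 1 1, 0), ((0 : Pt), 1)]

/-- Components of a vector in ℝ² × ℝ ≃ ℝ³. -/
def comp3 (p : Pt × ℝ) : Fin 3 → ℝ := ![p.1 0, p.1 1, p.2]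

/-- The 3×3 Jacobian matrix of the front-element field at a point of ℝ² × ℝ. -/
def jac3 (v₀ : ℝ) (u : Pt → Pt) (q : Pt × ℝ) : Matrix (Fin 3) (Fin 3) ℝ :=
  fun i j => comp3 (fderiv ℝ (frontField v₀ u) q (basis3 j)) i

/-- Second partial derivative ∂ⱼ∂ₖuᵢ(r). -/
def d2 (u : Pt → Pt) (r : Pt) (i j k : Fin 2) : ℝ :=
  fderiv ℝ (fun x => fderiv ℝ u x (EuclideanSpace.single k 1) i) r (EuclideanSpace.single j 1)

/-- Divergence-free: ∂₁u₁ + ∂₂u₂ = 0 everywhere. -/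
def divFree (u : Pt → Pt) : Prop := ∀ r : Pt, jacOf u r 0 0 + jacOf u r 1 1 = 0

/-- Rotation of a planar vector by +π/2. -/
def perp (v : Pt) : Pt := vec2 (-(v 1)) (v 0)

/-- The velocity field generated by a stream function: u = (∂Ψ/∂y, −∂Ψ/∂x). -/
def uOf (Ψ : Pt → ℝ) (x : Pt) : Pt :=
  vec2 (fderiv ℝ Ψ x (EuclideanSpace.single 1 1)) (-(fderiv ℝ Ψ x (EuclideanSpace.single 0 1)))

/-- Polar angle of a point of the plane. -/
def angOf (x : Pt) : ℝ := Complex.arg ⟨x 0, x 1⟩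


lemma vec2_apply0 (a b : ℝ) : vec2 a b 0 = a := rfl
lemma vec2_apply1 (a b : ℝ) : vec2 a b 1 = b := rfl

lemma clm_apply_eq (A : Pt →L[ℝ] ℝ) (v : Pt) :
    A v = v 0 * A (EuclideanSpace.single 0 1) + v 1 * A (EuclideanSpace.single 1 1) := by
  have hv : v = v 0 • (EuclideanSpace.single 0 1 : Pt) + v 1 • EuclideanSpace.single 1 1 := by
    ext i
    fin_cases i <;> simp [EuclideanSpace.single_apply]
  conv_lhs => rw [hv]
  simp


/-- A front element with ṙ(t) ≠ 0 is sliding if and only if the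
stream function changes at rate exactly v₀ per unit arc length:
|(d/dt) Ψ(r(t))| = v₀ |ṙ(t)|. -/
theorem sliding_iff_constant_stream_rate
    (v₀ : ℝ) (hv₀ : 0 < v₀) (Ψ : Pt → ℝ) (hΨ : ContDiff ℝ 1 Ψ)
    (a b : ℝ) (r : ℝ → Pt) (θ : ℝ → ℝ)
    (hr : ∀ t ∈ Set.Ioo a b, HasDerivAt r (uOf Ψ (r t) + v₀ • nhat (θ t)) t) :
    ∀ t ∈ Set.Ioo a b, uOf Ψ (r t) + v₀ • nhat (θ t) ≠ 0 →
      (dot (uOf Ψ (r t) + v₀ • nhat (θ t)) (nhat (θ t)) = 0 ↔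
        |deriv (fun s => Ψ (r s)) t| = v₀ * ‖uOf Ψ (r t) + v₀ • nhat (θ t)‖) := by
  intro t ht _hne
  set A := fderiv ℝ Ψ (r t) with hA
  set p := A (EuclideanSpace.single 0 1) with hp
  set q := A (EuclideanSpace.single 1 1) with hq
  set c := Real.cos (θ t) with hc
  set s := Real.sin (θ t) with hs
  have hpyth : s ^ 2 + c ^ 2 = 1 := Real.sin_sq_add_cos_sq (θ t)
  set R : Pt := uOf Ψ (r t) + v₀ • nhat (θ t) with hR
  have hR0 : R 0 = q + v₀ * s := by
    simp [hR, uOf, nhat, vec2_apply0, ← hq, ← hs]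
    rfl
  have hR1 : R 1 = -p - v₀ * c := by
    simp [hR, uOf, nhat, vec2_apply1, ← hp, ← hc]
    ring
  -- chain rule
  have hΨd : HasFDerivAt Ψ A (r t) :=
    (hΨ.differentiable one_ne_zero (r t)).hasFDerivAt
  have hder : HasDerivAt (fun s => Ψ (r s)) (A R) t :=
    hΨd.comp_hasDerivAt t (hr t ht)
  have hderiv : deriv (fun s => Ψ (r s)) t = v₀ * (s * p - c * q) := by
    rw [hder.deriv, clm_apply_eq A R, hR0, hR1, ← hp, ← hq]
    ring
  have hdot : dot R (nhat (θ t)) = q * s + p * c + v₀ := by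
    simp [dot, hR0, hR1, nhat, vec2_apply0, vec2_apply1, ← hs, ← hc]
    nlinarith [hpyth]
  have hX : 0 ≤ (q + v₀ * s) ^ 2 + (-p - v₀ * c) ^ 2 := by positivity
  have hnorm : ‖R‖ = Real.sqrt ((q + v₀ * s) ^ 2 + (-p - v₀ * c) ^ 2) := by
    rw [EuclideanSpace.norm_eq]
    congr 1
    rw [Fin.sum_univ_two, hR0, hR1]
    simp [sq_abs]
  rw [hdot, hderiv, hnorm, abs_mul, abs_of_pos hv₀, mul_right_inj' (ne_of_gt hv₀)]
  have key : (q + v₀ * s) ^ 2 + (-p - v₀ * c) ^ 2 - (s * p - c * q) ^ 2 =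
      (q * s + p * c + v₀) ^ 2 + (p ^ 2 + q ^ 2 - v₀ ^ 2) * (1 - (s ^ 2 + c ^ 2)) := by
    ring
  rw [hpyth] at key
  norm_num at key
  constructor
  · intro h
    rw [h] at key
    norm_num at key
    have hsq : (q + v₀ * s) ^ 2 + (-p - v₀ * c) ^ 2 = (s * p - c * q) ^ 2 := by
      linarith
    rw [hsq, Real.sqrt_sq_eq_abs]
  · intro h
    have h2 := congrArg (· ^ 2) h
    simp only [sq_abs] at h2
    rw [Real.sq_sqrt hX] at h2
    have h3 : (q * s + p * c + v₀) ^ 2 = 0 := by linarith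
    have h4 := pow_eq_zero_iff two_ne_zero |>.mp h3
    linarith
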